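/- Let s₁, t₁, s₂, t₂ ∈ ℝ^{4,2} be lightlike vectors, and suppose u₁, u₂, u₃ ∈ ℝ^{4,2} span a 3-dimensional subspace such that ⟨u_k, s_i + ⟨s_i,p⟩p⟩ = 0 and ⟨u_k, t_i + ⟨t_i,p⟩p⟩ = 0 for all k ∈ {1,2,3} and i ∈ {1,2} (three generic curvature spheres orthogonal to the two circles determined by (s₁,t₁) and (s₂,t₂)). Then dim span{s₁, s₂, t₁, t₂, p} ≤ 4. (Key step of the theorem: a discrete circle congruence admitting three generic orthogonal discrete Legendre maps has cospherical adjacent circles, hence is cyclic.) -/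

import Mathlib

noncomputable section

/-- The vector space ℝ^{4,2}, modeled as `Fin 6 → ℝ`. -/
abbrev R42 : Type := Fin 6 → ℝ

/-- The symmetric bilinear form of signature (4,2) on ℝ^{4,2}. -/
def bform : R42 →ₗ[ℝ] R42 →ₗ[ℝ] ℝ :=
  LinearMap.mk₂ ℝ
    (fun x y => x 0 * y 0 + x 1 * y 1 + x 2 * y 2 + x 3 * y 3 - x 4 * y 4 - x 5 * y 5)
    (fun x x' y => by simp only [Pi.add_apply]; ring)
    (fun c x y => by simp only [Pi.smul_apply, smul_eq_mul]; ring)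
    (fun x y y' => by simp only [Pi.add_apply]; ring)
    (fun c x y => by simp only [Pi.smul_apply, smul_eq_mul]; ring)

/-- A lightlike vector: nonzero and isotropic. Represents an oriented 2-sphere. -/
def IsLightlike (v : R42) : Prop := v ≠ 0 ∧ bform v v = 0

/-- The Lie inversion with respect to the linear sphere complex determined by `a`. -/
def lieInv (a r : R42) : R42 := r - (2 * bform r a / bform a a) • a

theorem bform_symm (x y : R42) : bform x y = bform y x := by
  simp only [bform, LinearMap.mk₂_apply]; ring

theorem bform_refl : (bform : LinearMap.BilinForm ℝ R42).IsRefl :=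
  fun x y h => by rw [bform_symm]; exact h

theorem bform_nondeg : LinearMap.BilinForm.Nondegenerate (bform : LinearMap.BilinForm ℝ R42) := by
  refine (LinearMap.IsRefl.nondegenerate_iff_separatingLeft bform_refl).mpr ?_
  refine fun x hx => funext fun i => ?_
  have h0 := hx (Pi.single 0 1)
  have h1 := hx (Pi.single 1 1)
  have h2 := hx (Pi.single 2 1)
  have h3 := hx (Pi.single 3 1)
  have h4 := hx (Pi.single 4 1)
  have h5 := hx (Pi.single 5 1)
  simp [bform, Pi.single_apply] at h0 h1 h2 h3 h4 h5
  fin_cases i <;> simpa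

/-- If three generic curvature spheres `u₁, u₂, u₃` (spanning a
3-dimensional subspace) are orthogonal to the two circles determined by the sphere
pairs `(s₁,t₁)` and `(s₂,t₂)`, then `span {s₁, s₂, t₁, t₂, p}` is at most
4-dimensional: adjacent circles of a circle congruence admitting three generic
orthogonal discrete Legendre maps are cospherical. -/
theorem stmt_13 (p s₁ t₁ s₂ t₂ u₁ u₂ u₃ : R42)
    (hp : bform p p = -1)
    (hs₁ : IsLightlike s₁) (ht₁ : IsLightlike t₁)
    (hs₂ : IsLightlike s₂) (ht₂ : IsLightlike t₂)
    (hdim : Module.finrank ℝ (Submodule.span ℝ ({u₁, u₂, u₃} : Set R42)) = 3)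
    (horth : ∀ u ∈ ({u₁, u₂, u₃} : Set R42),
      bform u (s₁ + bform s₁ p • p) = 0 ∧
      bform u (t₁ + bform t₁ p • p) = 0 ∧
      bform u (s₂ + bform s₂ p • p) = 0 ∧
      bform u (t₂ + bform t₂ p • p) = 0) :
    Module.finrank ℝ (Submodule.span ℝ ({s₁, s₂, t₁, t₂, p} : Set R42)) ≤ 4 := by
  classical
  set B : LinearMap.BilinForm ℝ R42 := bform with hB
  set U : Submodule ℝ R42 := Submodule.span ℝ ({u₁, u₂, u₃} : Set R42) with hU
  set N : Submodule ℝ R42 := B.orthogonal U with hN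
  -- anything killed by u₁,u₂,u₃ is in N
  have hmemN : ∀ v : R42, (∀ u ∈ ({u₁, u₂, u₃} : Set R42), bform u v = 0) → v ∈ N := by
    intro v hv
    rw [hN, LinearMap.BilinForm.mem_orthogonal_iff]
    intro n hn
    refine Submodule.span_induction (fun u hu => hv u hu) ?_ ?_ ?_ hn
    · simp [LinearMap.BilinForm.IsOrtho]
    · intro a b _ _ ha hb
      simp only [LinearMap.BilinForm.IsOrtho, map_add, LinearMap.add_apply] at *
      rw [ha, hb]; ring
    · intro c a _ ha
      simp only [LinearMap.BilinForm.IsOrtho, map_smul, LinearMap.smul_apply,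
        smul_eq_mul] at *
      rw [ha]; ring
  have hpN : p ∈ N ⊔ Submodule.span ℝ ({p} : Set R42) :=
    Submodule.mem_sup_right (Submodule.mem_span_singleton_self p)
  have key : ∀ s : R42, (∀ u ∈ ({u₁, u₂, u₃} : Set R42), bform u (s + bform s p • p) = 0) →
      s ∈ N ⊔ Submodule.span ℝ ({p} : Set R42) := by
    intro s hs
    have h1 : s + bform s p • p ∈ N := hmemN _ hs
    have h2 : (-(bform s p)) • p ∈ Submodule.span ℝ ({p} : Set R42) :=
      Submodule.smul_mem _ _ (Submodule.mem_span_singleton_self p)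
    have := Submodule.add_mem_sup h1 h2
    have heq : s + bform s p • p + (-(bform s p)) • p = s := by
      rw [neg_smul]; abel
    rwa [heq] at this
  have hspan : Submodule.span ℝ ({s₁, s₂, t₁, t₂, p} : Set R42) ≤
      N ⊔ Submodule.span ℝ ({p} : Set R42) := by
    rw [Submodule.span_le]
    rintro x (rfl | rfl | rfl | rfl | rfl)
    · exact key _ (fun u hu => (horth u hu).1)
    · exact key _ (fun u hu => (horth u hu).2.2.1)
    · exact key _ (fun u hu => (horth u hu).2.1)
    · exact key _ (fun u hu => (horth u hu).2.2.2)
    · exact hpN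
  have hle := Submodule.finrank_mono hspan
  have hsup : Module.finrank ℝ (N ⊔ Submodule.span ℝ ({p} : Set R42) : Submodule ℝ R42) ≤
      Module.finrank ℝ N + Module.finrank ℝ (Submodule.span ℝ ({p} : Set R42)) := by
    have := Submodule.finrank_sup_add_finrank_inf_eq N (Submodule.span ℝ ({p} : Set R42))
    omega
  have hNdim : Module.finrank ℝ N = 3 := by
    have h6 : Module.finrank ℝ R42 = 6 := by
      simp [Module.finrank_pi (ι := Fin 6) ℝ]
    rw [hN, LinearMap.BilinForm.finrank_orthogonal bform_nondeg U, hdim, h6]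
  have hpdim : Module.finrank ℝ (Submodule.span ℝ ({p} : Set R42)) ≤ 1 := by
    simpa using finrank_span_le_card ({p} : Set R42)
  omega
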